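/- Let X be a topological space, N a positive integer, and R > 0. Let h : X → ℝ → ℝ be a family of functions such that: (i) for each x ∈ X, h x is convex on (0, R] and h x (r) → 0 as r → 0⁺; (ii) for each x ∈ X there exist an integer b(x) and r₀(x) ∈ (0, R] such that h x (r) = (b(x)/N)·r for all r ∈ (0, r₀(x)]; and (iii) for each fixed r ∈ (0, R], the function x ↦ h x (r) is continuous on X. Then for every integer c, the set {x ∈ X : b(x) > c} is closed in X; in particular x ↦ b(x) is upper semicontinuous and, if b(x) ≥ 0 for all x, the set {x ∈ X : b(x) = 0} is open. -/

import Mathlib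

open Filter Set

/-- Semicontinuity of initial slopes: for a family `h x` of convex functions
on `(0,R]` tending to `0` at `0⁺`, affine of slope `b x / N` near `0`, and continuous in
`x` for each fixed `r`, the sets `{x | b x > c}` are closed; hence `b` is upper
semicontinuous and (when `b ≥ 0`) the vanishing locus of `b` is open. -/
theorem stmt_8 (X : Type*) [TopologicalSpace X] (N : ℕ) (hN : 0 < N)
    (R : ℝ) (hR : 0 < R) (h : X → ℝ → ℝ) (b : X → ℤ)
    (hconv : ∀ x, ConvexOn ℝ (Set.Ioc 0 R) (h x))
    (hlim : ∀ x, Tendsto (h x) (nhdsWithin 0 (Set.Ioi 0)) (nhds 0))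
    (haff : ∀ x, ∃ r₀ ∈ Set.Ioc 0 R, ∀ r ∈ Set.Ioc 0 r₀,
      h x r = ((b x : ℝ) / N) * r)
    (hcont : ∀ r ∈ Set.Ioc 0 R, Continuous fun x => h x r) :
    (∀ c : ℤ, IsClosed {x | c < b x}) ∧
    UpperSemicontinuous b ∧
    ((∀ x, 0 ≤ b x) → IsOpen {x | b x = 0}) := by
  have hNR : (0:ℝ) < N := by exact_mod_cast hN
  -- Key inequality: h x r ≥ (b x / N) * r on (0, R].
  have key : ∀ x, ∀ r ∈ Set.Ioc 0 R, ((b x : ℝ) / N) * r ≤ h x r := by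
    intro x r hr
    obtain ⟨r₀, hr₀, haffx⟩ := haff x
    set m : ℝ := (b x : ℝ) / N with hm
    set s : ℝ := min r₀ r / 2 with hs
    set t : ℝ := s / 2 with ht
    have hs0 : 0 < s := by
      have := lt_min hr₀.1 hr.1
      rw [hs]; linarith
    have ht0 : 0 < t := by positivity
    have hsr : s < r := by
      have h1 : min r₀ r ≤ r := min_le_right _ _
      have : s ≤ r / 2 := by rw [hs]; linarith
      linarith [hr.1]
    have hsr₀ : s ≤ r₀ := by
      have h1 : min r₀ r ≤ r₀ := min_le_left _ _
      rw [hs]; linarith [hr₀.1]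
    have hts : t < s := by rw [ht]; linarith
    have htmem : t ∈ Set.Ioc 0 R := ⟨ht0, by linarith [hr.2]⟩
    have hrmem : r ∈ Set.Ioc 0 R := hr
    have hht : h x t = m * t := haffx t ⟨ht0, by linarith⟩
    have hhs : h x s = m * s := haffx s ⟨hs0, hsr₀⟩
    have hrt : (0:ℝ) < r - t := by linarith
    set a : ℝ := (r - s) / (r - t) with ha
    set bb : ℝ := (s - t) / (r - t) with hbb
    have ha0 : 0 ≤ a := by apply div_nonneg <;> linarith
    have hbb0 : 0 ≤ bb := by apply div_nonneg <;> linarith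
    have hab : a + bb = 1 := by
      rw [ha, hbb, ← add_div, div_eq_one_iff_eq (ne_of_gt hrt)]; ring
    have hconvineq := (hconv x).2 htmem hrmem ha0 hbb0 hab
    have hpoint : a • t + bb • r = s := by
      simp only [smul_eq_mul, ha, hbb]
      field_simp
      ring
    rw [hpoint] at hconvineq
    simp only [smul_eq_mul] at hconvineq
    rw [hhs, hht] at hconvineq
    -- m * s ≤ a * (m * t) + bb * (h x r); multiply by (r - t) and simplify
    have h2 : m * s * (r - t) ≤ (r - s) * (m * t) + (s - t) * h x r := by
      have := mul_le_mul_of_nonneg_right hconvineq (le_of_lt hrt)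
      calc m * s * (r - t) ≤ (a * (m * t) + bb * h x r) * (r - t) := this
        _ = (r - s) * (m * t) + (s - t) * h x r := by
            rw [ha, hbb]; field_simp
    have h3 : m * r * (s - t) ≤ (s - t) * h x r := by nlinarith
    have hst : (0:ℝ) < s - t := by linarith
    nlinarith
  have hclosed : ∀ c : ℤ, IsClosed {x | c < b x} := by
    intro c
    have hset : {x | c < b x} =
        ⋂ r ∈ Set.Ioc (0:ℝ) R, {x | ((c:ℝ) + 1) / N * r ≤ h x r} := by
      ext x
      simp only [Set.mem_setOf_eq, Set.mem_iInter]
      constructor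
      · intro hc r hr
        have hcb : ((c:ℝ) + 1) ≤ (b x : ℝ) := by exact_mod_cast hc
        have h1 : ((c:ℝ) + 1) / N ≤ (b x : ℝ) / N := by gcongr
        have h2 : ((c:ℝ) + 1) / N * r ≤ (b x : ℝ) / N * r :=
          mul_le_mul_of_nonneg_right h1 hr.1.le
        exact h2.trans (key x r hr)
      · intro hall
        obtain ⟨r₀, hr₀, haffx⟩ := haff x
        have h1 := hall r₀ hr₀
        rw [haffx r₀ ⟨hr₀.1, le_refl _⟩] at h1
        have h2 : ((c:ℝ) + 1) / N ≤ (b x : ℝ) / N :=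
          le_of_mul_le_mul_right h1 hr₀.1
        have h3 : ((c:ℝ) + 1) ≤ (b x : ℝ) := by
          have h4 := mul_le_mul_of_nonneg_right h2 hNR.le
          rwa [div_mul_cancel₀, div_mul_cancel₀] at h4 <;> exact ne_of_gt hNR
        have : (c:ℤ) + 1 ≤ b x := by exact_mod_cast h3
        omega
    rw [hset]
    exact isClosed_biInter fun r hr =>
      isClosed_le continuous_const (hcont r hr)
  refine ⟨hclosed, ?_, ?_⟩
  · intro x y hy
    have hopen : IsOpen {x | b x < y} := by
      have : {x | b x < y} = {x | y - 1 < b x}ᶜ := by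
        ext z; simp only [Set.mem_setOf_eq, Set.mem_compl_iff, not_lt]; omega
      rw [this]
      exact (hclosed (y - 1)).isOpen_compl
    exact eventually_of_mem (hopen.mem_nhds hy) fun z hz => hz
  · intro hb
    have : {x | b x = 0} = {x | 0 < b x}ᶜ := by
      ext z
      simp only [Set.mem_setOf_eq, Set.mem_compl_iff, not_lt]
      have := hb z; omega
    rw [this]
    exact (hclosed 0).isOpen_compl
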